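/- In the formal power series ring R⟦x,t⟧ the following factorization holds: ∑_{n≥k≥0} B^0_{n,k} x^n t^k/n! = ( ∑_{n,r≥0} ∂^n(b_1^r) · x^{n+r} t^r/(n!·r!) ) · exp( −t·∑_{i≥2} ((i−1)/i!)·b_i x^i ). -/

import Mathlib

noncomputable section

/-- `R = ℚ[a_1,a_2,…;b_1,b_2,…]`, realized as the polynomial ring over `ℚ` with variables
`X (true, i) = a_i` and `X (false, i) = b_i`. -/
abbrev RR : Type := MvPolynomial (Bool × ℕ) ℚ

/-- the variable `a_i` -/
def va (i : ℕ) : RR := MvPolynomial.X (true, i)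
/-- the variable `b_i` -/
def vb (i : ℕ) : RR := MvPolynomial.X (false, i)

/-- the derivation `∂` of `R` with `∂ a_i = a_{i+1}` and `∂ b_i = b_{i+1}` -/
def del : RR → RR :=
  fun p => MvPolynomial.mkDerivation ℚ (fun s : Bool × ℕ => MvPolynomial.X (s.1, s.2 + 1)) p

/-- coefficientwise extension of a map on coefficients to `A[t]` (i.e. `∂` with `∂ t = 0`) -/
def polyLift {A : Type*} [Semiring A] (D : A → A) (p : Polynomial A) : Polynomial A :=
  p.sum fun i c => Polynomial.C (D c) * Polynomial.X ^ i

/-- the map `E : R[t] → R[t]`, `E(p) = t·b_1·p + ∂(p)` -/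
def EOp (p : Polynomial RR) : Polynomial RR :=
  Polynomial.C (vb 1) * Polynomial.X * p + polyLift del p

/-- the partial `r`-Bell polynomial `B^r_{n+r,k+r}`: the coefficient of `t^k` in `E^n(a_1^r)` -/
def rBell (n k r : ℕ) : RR := (EOp^[n] (Polynomial.C (va 1 ^ r))).coeff k

/-- Exponential of a formal multivariate power series (intended for series with zero
constant term): `exp(u) = ∑_{j≥0} u^j/j!`; for a series `u` of positive order only the
terms with `j ≤ |d|` contribute to the coefficient of a monomial of total degree `|d|`. -/
def sexp {σ : Type*} {A : Type*} [Ring A] [Algebra ℚ A] (u : MvPowerSeries σ A) :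
    MvPowerSeries σ A :=
  fun d => MvPowerSeries.coeff d
    (∑ j ∈ Finset.range (d.sum (fun _ m => m) + 1), (j.factorial : ℚ)⁻¹ • u ^ j)


/-- The series `S°(t,x) = ∑_{n≥k≥0} B^0_{n,k} x^n t^k/n!` in `R⟦x,t⟧`
(coordinates `0 ↦ x`, `1 ↦ t`). -/
def Scirc : MvPowerSeries (Fin 2) RR :=
  fun d => if d 1 ≤ d 0 then ((d 0).factorial : ℚ)⁻¹ • rBell (d 0) (d 1) 0 else 0

/-- The series `S^*(x,xt) = ∑_{n,r≥0} ∂^n(b_1^r)·x^{n+r} t^r/(n!·r!)` in `R⟦x,t⟧`: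
the coefficient of `x^α t^γ` is `∂^{α-γ}(b_1^γ)/((α-γ)!·γ!)` when `γ ≤ α`,
and `0` otherwise. -/
def Sstar : MvPowerSeries (Fin 2) RR :=
  fun d => if d 1 ≤ d 0 then
    (((d 0 - d 1).factorial * (d 1).factorial : ℚ))⁻¹ • del^[d 0 - d 1] (vb 1 ^ d 1)
  else 0

/-- the series `−t·∑_{i≥2} ((i−1)/i!)·b_i x^i` in `R⟦x,t⟧` -/
def Zarg2 : MvPowerSeries (Fin 2) RR :=
  fun d => if d 1 = 1 ∧ 2 ≤ d 0 then
    (-(((d 0 : ℚ) - 1) / ((d 0).factorial : ℚ))) • vb (d 0)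
  else 0


open Finset

def delD : Derivation ℚ RR RR :=
  MvPolynomial.mkDerivation ℚ (fun s : Bool × ℕ => MvPolynomial.X (s.1, s.2 + 1))
lemma del_eq (p : RR) : del p = delD p := rfl
lemma del_add (p q : RR) : del (p + q) = del p + del q := by simp [del_eq]
lemma del_zero : del (0 : RR) = 0 := by simp [del_eq]
lemma del_one : del (1 : RR) = 0 := by simp [del_eq]
lemma del_smul (q : ℚ) (p : RR) : del (q • p) = q • del p := by simp [del_eq]
lemma del_mul (p q : RR) : del (p * q) = p * del q + q * del p := by
  simp [del_eq, Derivation.leibniz, smul_eq_mul]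
lemma del_vb (i : ℕ) : del (vb i) = vb (i + 1) := by
  simp [del_eq, delD, vb, MvPolynomial.mkDerivation_X]
lemma del_iter_vb (m : ℕ) : del^[m] (vb 1) = vb (m + 1) := by
  induction m with
  | zero => rfl
  | succ m ih => rw [Function.iterate_succ_apply', ih, del_vb]
lemma del_iter_zero (m : ℕ) : del^[m] (0 : RR) = 0 := by
  induction m with
  | zero => rfl
  | succ m ih => rw [Function.iterate_succ_apply', ih, del_zero]
lemma del_iter_one (m : ℕ) (hm : 1 ≤ m) : del^[m] (1 : RR) = 0 := by
  obtain ⟨m, rfl⟩ := Nat.exists_eq_add_of_le hm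
  rw [add_comm, Function.iterate_add_apply, Function.iterate_one, del_one, del_iter_zero]
lemma del_sum {s : Finset ℕ} (f : ℕ → RR) : del (∑ i ∈ s, f i) = ∑ i ∈ s, del (f i) := by
  simp [del_eq]

-- Fin 2 Finsupp infrastructure
def DD (α γ : ℕ) : Fin 2 →₀ ℕ := Finsupp.single 0 α + Finsupp.single 1 γ
lemma DD_apply0 (α γ : ℕ) : DD α γ 0 = α := by simp [DD]
lemma DD_apply1 (α γ : ℕ) : DD α γ 1 = γ := by simp [DD]
lemma eq_DD (d : Fin 2 →₀ ℕ) : d = DD (d 0) (d 1) := by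
  ext i; fin_cases i <;> simp [DD, Finsupp.single_apply]

def deg (d : Fin 2 →₀ ℕ) : ℕ := d.sum fun _ m => m
lemma deg_eq (d : Fin 2 →₀ ℕ) : deg d = d 0 + d 1 := by
  rw [deg, Finsupp.sum_fintype _ _ (fun _ => rfl), Fin.sum_univ_two]
lemma deg_add (d e : Fin 2 →₀ ℕ) : deg (d + e) = deg d + deg e := by
  simp only [deg_eq, Finsupp.add_apply]; ring
lemma eq_zero_iff (d : Fin 2 →₀ ℕ) : d = 0 ↔ d 0 = 0 ∧ d 1 = 0 := by
  constructor
  · intro h; simp [h]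
  · rintro ⟨h0, h1⟩; ext i; fin_cases i <;> simpa
lemma deg_eq_zero_iff (d : Fin 2 →₀ ℕ) : deg d = 0 ↔ d = 0 := by
  rw [deg_eq, eq_zero_iff]; omega

lemma sum_antidiagonal_DD {M : Type*} [AddCommMonoid M] (α γ : ℕ)
    (f : (Fin 2 →₀ ℕ) → (Fin 2 →₀ ℕ) → M) :
    ∑ p ∈ Finset.HasAntidiagonal.antidiagonal (DD α γ), f p.1 p.2
      = ∑ a ∈ Finset.HasAntidiagonal.antidiagonal α, ∑ c ∈ Finset.HasAntidiagonal.antidiagonal γ, f (DD a.1 c.1) (DD a.2 c.2) := by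
  rw [← Finset.sum_product']
  apply Finset.sum_nbij' (i := fun p => ((p.1 0, p.2 0), (p.1 1, p.2 1)))
    (j := fun q => (DD q.1.1 q.2.1, DD q.1.2 q.2.2))
  · intro p hp
    rw [Finset.HasAntidiagonal.mem_antidiagonal] at hp
    simp only [Finset.mem_product, Finset.HasAntidiagonal.mem_antidiagonal]
    constructor
    · have := congrArg (fun d => d 0) hp; simpa [DD_apply0, Finsupp.add_apply] using this
    · have := congrArg (fun d => d 1) hp; simpa [DD_apply1, Finsupp.add_apply] using this
  · intro q hq
    simp only [Finset.mem_product, Finset.HasAntidiagonal.mem_antidiagonal] at hq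
    rw [Finset.HasAntidiagonal.mem_antidiagonal]
    ext i; fin_cases i
    · simpa [Finsupp.add_apply, DD_apply0] using hq.1
    · simpa [Finsupp.add_apply, DD_apply1] using hq.2
  · intro p hp
    rw [Prod.ext_iff]
    exact ⟨(eq_DD p.1).symm, (eq_DD p.2).symm⟩
  · intro q hq
    simp [DD_apply0, DD_apply1]
  · intro p hp
    rw [← eq_DD p.1, ← eq_DD p.2]

-- tLin and Pfun
def tLin (w : ℕ → RR) : MvPowerSeries (Fin 2) RR := fun d => if d 1 = 1 then w (d 0) else 0
def Pfun (w : ℕ → RR) (j α : ℕ) : RR := MvPowerSeries.coeff (DD α j) ((tLin w)^j)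

lemma coeff_tLin (w : ℕ → RR) (d : Fin 2 →₀ ℕ) :
    MvPowerSeries.coeff d (tLin w) = if d 1 = 1 then w (d 0) else 0 := rfl

lemma coeff_tpow_ne (w : ℕ → RR) : ∀ (j : ℕ) (d : Fin 2 →₀ ℕ), d 1 ≠ j →
    MvPowerSeries.coeff d ((tLin w)^j) = 0 := by
  intro j
  induction j with
  | zero =>
    intro d hd
    rw [pow_zero, MvPowerSeries.coeff_one, if_neg]
    intro h
    exact hd (by rw [h]; rfl)
  | succ j ih =>
    intro d hd
    rw [pow_succ', MvPowerSeries.coeff_mul]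
    apply Finset.sum_eq_zero
    intro p hp
    rw [Finset.HasAntidiagonal.mem_antidiagonal] at hp
    have h1 : p.1 1 + p.2 1 = d 1 := by rw [← hp]; rfl
    by_cases hc : p.1 1 = 1
    · have h2 : p.2 1 ≠ j := by omega
      rw [ih _ h2, mul_zero]
    · rw [coeff_tLin, if_neg hc, zero_mul]

lemma Pfun_zero (w : ℕ → RR) (α : ℕ) : Pfun w 0 α = if α = 0 then 1 else 0 := by
  rw [Pfun, pow_zero, MvPowerSeries.coeff_one]
  congr 1
  simp only [eq_iff_iff]
  rw [eq_zero_iff, DD_apply0, DD_apply1]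
  omega

lemma Pfun_succ (w : ℕ → RR) (j α : ℕ) :
    Pfun w (j+1) α = ∑ i ∈ Finset.range (α+1), w i * Pfun w j (α - i) := by
  rw [Pfun, pow_succ', MvPowerSeries.coeff_mul, sum_antidiagonal_DD α (j+1)
    (fun d1 d2 => MvPowerSeries.coeff d1 (tLin w) * MvPowerSeries.coeff d2 ((tLin w)^j))]
  have h1 : ∀ a ∈ Finset.HasAntidiagonal.antidiagonal α,
      (∑ c ∈ Finset.HasAntidiagonal.antidiagonal (j+1),
        MvPowerSeries.coeff (DD a.1 c.1) (tLin w) * MvPowerSeries.coeff (DD a.2 c.2) ((tLin w)^j))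
      = w a.1 * Pfun w j a.2 := by
    intro a ha
    rw [Finset.sum_eq_single (1, j)]
    · rw [coeff_tLin, DD_apply1, DD_apply0, if_pos rfl, Pfun]
    · intro c hc hne
      rw [Finset.HasAntidiagonal.mem_antidiagonal] at hc
      by_cases h2 : c.1 = 1
      · have h3 : c.2 ≠ j := by
          intro h4
          exact hne (by rw [Prod.ext_iff]; exact ⟨h2, h4⟩)
        rw [coeff_tpow_ne w j _ (by rw [DD_apply1]; exact h3), mul_zero]
      · rw [coeff_tLin, DD_apply1, if_neg h2, zero_mul]
    · intro h
      exact absurd (Finset.HasAntidiagonal.mem_antidiagonal.mpr (by omega)) h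
  rw [Finset.sum_congr rfl h1, Finset.Nat.sum_antidiagonal_eq_sum_range_succ_mk]

lemma Pfun_xorder (w : ℕ → RR) (hw : w 0 = 0) : ∀ (j α : ℕ), α < j → Pfun w j α = 0 := by
  intro j
  induction j with
  | zero => intro α h; omega
  | succ j ih =>
    intro α h
    rw [Pfun_succ]
    apply Finset.sum_eq_zero
    intro i hi
    have hi' := Finset.mem_range.mp hi
    rcases Nat.eq_zero_or_pos i with h0 | h0
    · rw [h0, hw, zero_mul]
    · rw [ih (α - i) (by omega), mul_zero]

-- iterated Leibniz
lemma del_iter_mul (n : ℕ) (p q : RR) :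
    del^[n] (p * q) = ∑ i ∈ Finset.range (n + 1), (n.choose i : ℚ) • (del^[i] p * del^[n - i] q) := by
  induction n with
  | zero => simp
  | succ n ih =>
    rw [Function.iterate_succ_apply', ih, del_sum]
    have h1 : ∀ i ∈ Finset.range (n+1), del ((n.choose i : ℚ) • (del^[i] p * del^[n - i] q))
        = (n.choose i : ℚ) • (del^[i] p * del^[n - i + 1] q)
          + (n.choose i : ℚ) • (del^[i+1] p * del^[n - i] q) := by
      intro i hi
      rw [del_smul, del_mul, smul_add, ← Function.iterate_succ_apply' del,
        ← Function.iterate_succ_apply' del]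
      rw [mul_comm (del^[n-i] q)]
    rw [Finset.sum_congr rfl h1, Finset.sum_add_distrib]
    rw [Finset.sum_range_succ' (fun i => ((n+1).choose i : ℚ) • (del^[i] p * del^[n + 1 - i] q))]
    have h2 : ∀ i ∈ Finset.range (n+1), (((n+1).choose (i+1) : ℚ)) • (del^[i+1] p * del^[n + 1 - (i+1)] q)
        = (n.choose i : ℚ) • (del^[i+1] p * del^[n - i] q)
          + (n.choose (i+1) : ℚ) • (del^[i+1] p * del^[n - i] q) := by
      intro i hi
      rw [Nat.choose_succ_succ]
      push_cast
      rw [add_smul]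
    rw [Finset.sum_congr rfl h2, Finset.sum_add_distrib]
    have h3 : ∑ i ∈ Finset.range (n+1), (n.choose i : ℚ) • (del^[i] p * del^[n - i + 1] q)
        = ∑ i ∈ Finset.range (n+1), (n.choose (i+1) : ℚ) • (del^[i+1] p * del^[n - i] q)
          + ((n+1).choose 0 : ℚ) • (del^[0] p * del^[n + 1 - 0] q) := by
      rw [Finset.sum_range_succ' (fun i => (n.choose i : ℚ) • (del^[i] p * del^[n - i + 1] q))]
      rw [Finset.sum_range_succ (fun i => (n.choose (i+1) : ℚ) • (del^[i+1] p * del^[n - i] q))]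
      rw [Nat.choose_succ_self]
      push_cast
      rw [zero_smul, add_zero]
      congr 1
      · apply Finset.sum_congr rfl
        intro i hi
        simp only [Finset.mem_range] at hi
        have h : n - (i+1) + 1 = n - i := by omega
        rw [h]
      · simp
    rw [h3]
    ring

-- the derivative lemma for Pfun
lemma Pfun_del (w : ℕ → RR)
    (hw : ∀ i, del (w i) = ((i:ℚ)+1) • w (i+1) - (if i = 0 then vb 1 else 0)) :
    ∀ j α, del (Pfun w j α)
      = ((α:ℚ)+1) • Pfun w j (α+1) - (j:ℚ) • (vb 1 * Pfun w (j-1) α) := by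
  intro j
  induction j with
  | zero =>
    intro α
    have h0 : Pfun w 0 (α+1) = 0 := by rw [Pfun_zero]; simp
    rw [Pfun_zero, h0]
    by_cases hα : α = 0 <;> simp [hα, del_one, del_zero]
  | succ j ih =>
    intro α
    rw [Pfun_succ, del_sum]
    have hterm : ∀ i ∈ Finset.range (α+1),
        del (w i * Pfun w j (α - i))
          = ((((α-i : ℕ) :ℚ)+1) • (w i * Pfun w j (α-i+1))
            - (j:ℚ) • (w i * (vb 1 * Pfun w (j-1) (α-i))))
            + ((((i:ℕ):ℚ)+1) • (w (i+1) * Pfun w j (α-i))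
            - (if i = 0 then vb 1 * Pfun w j α else 0)) := by
      intro i hi
      rw [del_mul, ih (α-i), hw i]
      by_cases h0 : i = 0
      · subst h0
        simp only [Nat.sub_zero, if_pos, Nat.cast_zero, MvPolynomial.smul_eq_C_mul, reduceIte]
        ring
      · simp only [if_neg h0, MvPolynomial.smul_eq_C_mul]
        ring
    rw [Finset.sum_congr rfl hterm, Finset.sum_add_distrib, Finset.sum_sub_distrib,
      Finset.sum_sub_distrib]
    -- sum of B terms
    have hB : ∑ i ∈ Finset.range (α+1), (j:ℚ) • (w i * (vb 1 * Pfun w (j-1) (α-i)))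
        = (j:ℚ) • (vb 1 * Pfun w j α) := by
      rcases Nat.eq_zero_or_pos j with h0 | h0
      · simp [h0]
      · have hj : j - 1 + 1 = j := by omega
        rw [← Finset.smul_sum]
        congr 1
        have : ∀ i ∈ Finset.range (α+1), w i * (vb 1 * Pfun w (j-1) (α-i))
            = vb 1 * (w i * Pfun w (j-1) (α-i)) := by intro i hi; ring
        rw [Finset.sum_congr rfl this, ← Finset.mul_sum, ← Pfun_succ, hj]
    -- sum of D terms
    have hD : ∑ i ∈ Finset.range (α+1), (if i = 0 then vb 1 * Pfun w j α else 0)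
        = vb 1 * Pfun w j α := by
      rw [Finset.sum_ite_eq' (Finset.range (α+1)) 0 (fun _ => vb 1 * Pfun w j α)]
      simp
    -- sum of A + C terms
    have hAC : ∑ i ∈ Finset.range (α+1), ((((α-i : ℕ) :ℚ)+1) • (w i * Pfun w j (α-i+1)))
        + ∑ i ∈ Finset.range (α+1), ((((i:ℕ):ℚ)+1) • (w (i+1) * Pfun w j (α-i)))
        = ((α:ℚ)+1) • Pfun w (j+1) (α+1) := by
      rw [Pfun_succ, Finset.smul_sum]
      have hsplit : ∀ i ∈ Finset.range (α+2), ((α:ℚ)+1) • (w i * Pfun w j (α+1-i))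
          = (((α+1-i : ℕ):ℚ)) • (w i * Pfun w j (α+1-i))
            + ((i:ℕ):ℚ) • (w i * Pfun w j (α+1-i)) := by
        intro i hi
        simp only [Finset.mem_range] at hi
        rw [← add_smul]
        congr 1
        have h2 : (i:ℕ) ≤ α + 1 := by omega
        have : ((α+1-i : ℕ):ℚ) = ((α:ℚ)+1) - (i:ℚ) := by push_cast [h2]; ring
        rw [this]; ring
      rw [Finset.sum_congr rfl hsplit, Finset.sum_add_distrib]
      congr 1
      · -- first piece matches A
        conv_rhs => rw [Finset.sum_range_succ]
        simp only [Nat.sub_self, Nat.cast_zero, zero_smul, add_zero]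
        apply Finset.sum_congr rfl
        intro i hi
        simp only [Finset.mem_range] at hi
        have h1 : α + 1 - i = (α - i) + 1 := by omega
        rw [h1]
        push_cast
        ring_nf
      · -- second piece matches C
        conv_rhs => rw [Finset.sum_range_succ'
          (fun i => ((i:ℕ):ℚ) • (w i * Pfun w j (α+1-i)))]
        simp only [Nat.cast_zero, zero_smul, add_zero]
        apply Finset.sum_congr rfl
        intro i hi
        have h1 : α + 1 - (i+1) = α - i := by omega
        rw [h1]
        push_cast
        ring_nf
    rw [hB, hD, sub_add_sub_comm, hAC]
    congr 1
    push_cast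
    rw [add_smul, one_smul]


def texp (u : MvPowerSeries (Fin 2) RR) (N : ℕ) : MvPowerSeries (Fin 2) RR :=
  ∑ j ∈ Finset.range N, ((j.factorial : ℚ))⁻¹ • u ^ j

lemma coeff_qsmul (q : ℚ) (u : MvPowerSeries (Fin 2) RR) (d : Fin 2 →₀ ℕ) :
    MvPowerSeries.coeff d (q • u) = q • MvPowerSeries.coeff d u := rfl

lemma sexp_coeff (u : MvPowerSeries (Fin 2) RR) (d : Fin 2 →₀ ℕ) :
    MvPowerSeries.coeff d (sexp u) = MvPowerSeries.coeff d (texp u (deg d + 1)) := rfl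

lemma coeff_pow_zero {u : MvPowerSeries (Fin 2) RR} (hu : u 0 = 0) :
    ∀ (j : ℕ) (d : Fin 2 →₀ ℕ), deg d < j → MvPowerSeries.coeff d (u ^ j) = 0 := by
  intro j
  induction j with
  | zero => intro d h; omega
  | succ j ih =>
    intro d h
    rw [pow_succ', MvPowerSeries.coeff_mul]
    apply Finset.sum_eq_zero
    intro p hp
    rw [Finset.HasAntidiagonal.mem_antidiagonal] at hp
    by_cases h1 : p.1 = 0
    · rw [MvPowerSeries.coeff_apply, h1, hu, zero_mul]
    · have h2 : 1 ≤ deg p.1 := by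
        rcases Nat.eq_zero_or_pos (deg p.1) with h3 | h3
        · exact absurd ((deg_eq_zero_iff p.1).mp h3) h1
        · exact h3
      have h4 : deg p.2 < j := by
        have := deg_add p.1 p.2
        rw [hp] at this
        omega
      rw [ih p.2 h4, mul_zero]

lemma coeff_pow_mul_zero {u v : MvPowerSeries (Fin 2) RR} (hu : u 0 = 0) (hv : v 0 = 0)
    (j k : ℕ) (d : Fin 2 →₀ ℕ) (h : deg d < j + k) :
    MvPowerSeries.coeff d (u ^ j * v ^ k) = 0 := by
  rw [MvPowerSeries.coeff_mul]
  apply Finset.sum_eq_zero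
  intro p hp
  rw [Finset.HasAntidiagonal.mem_antidiagonal] at hp
  have hdeg : deg p.1 + deg p.2 = deg d := by rw [← deg_add, hp]
  rcases Nat.lt_or_ge (deg p.1) j with h1 | h1
  · rw [coeff_pow_zero hu j p.1 h1, zero_mul]
  · rw [coeff_pow_zero hv k p.2 (by omega), mul_zero]

lemma coeff_texp_stable {u : MvPowerSeries (Fin 2) RR} (hu : u 0 = 0) (d : Fin 2 →₀ ℕ)
    {N : ℕ} (h : deg d < N) :
    MvPowerSeries.coeff d (texp u N) = MvPowerSeries.coeff d (texp u (deg d + 1)) := by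
  rw [texp, texp, map_sum, map_sum]
  symm
  apply Finset.sum_subset
  · intro x hx
    simp only [Finset.mem_range] at *
    omega
  · intro x hx hx2
    simp only [Finset.mem_range] at hx2
    rw [coeff_qsmul, coeff_pow_zero hu x d (by omega), smul_zero]

lemma sexp_mul {u v : MvPowerSeries (Fin 2) RR} (hu : u 0 = 0) (hv : v 0 = 0) :
    sexp (u + v) = sexp u * sexp v := by
  apply MvPowerSeries.ext
  intro d
  set N := deg d + 1 with hN
  have huv : (u + v) 0 = 0 := by
    have : (u + v) 0 = u 0 + v 0 := rfl
    rw [this, hu, hv, add_zero]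
  -- RHS = coeff d (texp u N * texp v N)
  have hR : MvPowerSeries.coeff d (sexp u * sexp v)
      = MvPowerSeries.coeff d (texp u N * texp v N) := by
    rw [MvPowerSeries.coeff_mul, MvPowerSeries.coeff_mul]
    apply Finset.sum_congr rfl
    intro p hp
    rw [Finset.HasAntidiagonal.mem_antidiagonal] at hp
    have hdeg : deg p.1 + deg p.2 = deg d := by rw [← deg_add, hp]
    have e1 : MvPowerSeries.coeff p.1 (sexp u) = MvPowerSeries.coeff p.1 (texp u N) := by
      rw [sexp_coeff, eq_comm]
      exact coeff_texp_stable hu p.1 (by omega)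
    have e2 : MvPowerSeries.coeff p.2 (sexp v) = MvPowerSeries.coeff p.2 (texp v N) := by
      rw [sexp_coeff, eq_comm]
      exact coeff_texp_stable hv p.2 (by omega)
    rw [e1, e2]
  rw [hR, sexp_coeff]
  -- both sides as sums over pairs
  have hprod : MvPowerSeries.coeff d (texp u N * texp v N)
      = ∑ p ∈ Finset.range N ×ˢ Finset.range N,
          (((p.1.factorial : ℚ))⁻¹ * ((p.2.factorial : ℚ))⁻¹)
            • MvPowerSeries.coeff d (u ^ p.1 * v ^ p.2) := by
    rw [texp, texp, Finset.sum_mul_sum]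
    rw [← Finset.sum_product']
    rw [map_sum]
    apply Finset.sum_congr rfl
    intro p hp
    rw [smul_mul_assoc, mul_smul_comm, coeff_qsmul, coeff_qsmul, smul_smul]
  rw [hprod]
  -- LHS expansion
  have hL : MvPowerSeries.coeff d (texp (u+v) N)
      = ∑ m ∈ Finset.range N, ∑ i ∈ Finset.range (m+1),
          (((i.factorial : ℚ))⁻¹ * (((m-i).factorial : ℚ))⁻¹)
            • MvPowerSeries.coeff d (u ^ i * v ^ (m-i)) := by
    rw [texp, map_sum]
    apply Finset.sum_congr rfl
    intro m hm
    rw [coeff_qsmul, add_pow, map_sum, Finset.smul_sum]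
    apply Finset.sum_congr rfl
    intro i hi
    simp only [Finset.mem_range] at hi
    have hle : i ≤ m := by omega
    have : MvPowerSeries.coeff d (u ^ i * v ^ (m - i) * (m.choose i : MvPowerSeries (Fin 2) RR))
        = (m.choose i : ℚ) • MvPowerSeries.coeff d (u ^ i * v ^ (m-i)) := by
      rw [mul_comm, ← nsmul_eq_mul, map_nsmul, ← Nat.cast_smul_eq_nsmul ℚ]
    rw [this, smul_smul]
    congr 1
    rw [Nat.cast_choose ℚ hle]
    have f1 : ((m.factorial : ℚ)) ≠ 0 := Nat.cast_ne_zero.mpr (Nat.factorial_ne_zero m)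
    have f2 : ((i.factorial : ℚ)) ≠ 0 := Nat.cast_ne_zero.mpr (Nat.factorial_ne_zero i)
    have f3 : (((m-i).factorial : ℚ)) ≠ 0 := Nat.cast_ne_zero.mpr (Nat.factorial_ne_zero (m-i))
    field_simp
  rw [hL]
  -- reindex: both equal sum over filtered product
  have hstep : ∀ p : ℕ × ℕ, p ∈ Finset.range N ×ˢ Finset.range N →
      ((((p.1.factorial : ℚ))⁻¹ * ((p.2.factorial : ℚ))⁻¹)
        • MvPowerSeries.coeff d (u ^ p.1 * v ^ p.2)) ≠ 0 → p.1 + p.2 < N := by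
    intro p hp hne
    by_contra hcon
    exact hne (by rw [coeff_pow_mul_zero hu hv p.1 p.2 d (by omega), smul_zero])
  rw [← Finset.sum_filter_of_ne hstep]
  rw [Finset.sum_sigma' (Finset.range N) (fun m => Finset.range (m+1))]
  apply Finset.sum_nbij' (i := fun q => (q.2, q.1 - q.2)) (j := fun p => ⟨p.1 + p.2, p.1⟩)
  · intro q hq
    simp only [Finset.mem_sigma, Finset.mem_range] at hq
    simp only [Finset.mem_filter, Finset.mem_product, Finset.mem_range]
    omega
  · intro p hp
    simp only [Finset.mem_filter, Finset.mem_product, Finset.mem_range] at hp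
    simp only [Finset.mem_sigma, Finset.mem_range]
    omega
  · intro q hq
    simp only [Finset.mem_sigma, Finset.mem_range] at hq
    have : q.1 - q.2 + q.2 = q.1 := by omega
    exact Sigma.ext (by simp; omega) (by simp)
  · intro p hp
    simp only [Finset.mem_filter, Finset.mem_product, Finset.mem_range] at hp
    have h2 : p.1 + p.2 - p.1 = p.2 := by omega
    simp [h2]
  · intro q hq
    rfl

-- helper on factorials
lemma fact_ne (n : ℕ) : ((n.factorial : ℚ)) ≠ 0 := Nat.cast_ne_zero.mpr (Nat.factorial_ne_zero n)

lemma fact_inv_choose (n m : ℕ) (h : m ≤ n) :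
    ((n.factorial : ℚ))⁻¹ * (n.choose m : ℚ)
      = ((m.factorial : ℚ))⁻¹ * (((n-m).factorial : ℚ))⁻¹ := by
  rw [Nat.cast_choose ℚ h]
  have f1 := fact_ne n
  have f2 := fact_ne m
  have f3 := fact_ne (n - m)
  field_simp

-- coefficient of tLin powers at matching t-degree
lemma coeff_tpow (w : ℕ → RR) (j : ℕ) (d : Fin 2 →₀ ℕ) (h : d 1 = j) :
    MvPowerSeries.coeff d ((tLin w)^j) = Pfun w j (d 0) := by
  rw [Pfun]
  conv_lhs => rw [show d = DD (d 0) j from by rw [← h]; exact eq_DD d]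

lemma sexp_tLin (w : ℕ → RR) (d : Fin 2 →₀ ℕ) :
    MvPowerSeries.coeff d (sexp (tLin w)) = (((d 1).factorial : ℚ))⁻¹ • Pfun w (d 1) (d 0) := by
  rw [sexp_coeff, texp, map_sum, Finset.sum_eq_single (d 1)]
  · rw [coeff_qsmul, coeff_tpow w (d 1) d rfl]
  · intro j hj hne
    rw [coeff_qsmul, coeff_tpow_ne w j d (Ne.symm hne), smul_zero]
  · intro hd
    exact absurd (Finset.mem_range.mpr (by rw [deg_eq]; omega)) hd

-- the two coefficient families
def w1 : ℕ → RR := fun i => if i = 0 then 0 else ((i.factorial : ℚ))⁻¹ • vb i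
def w2 : ℕ → RR := fun i => if i = 0 then 0 else (((i-1).factorial : ℚ))⁻¹ • vb i

lemma w1_zero : w1 0 = 0 := rfl
lemma w2_zero : w2 0 = 0 := rfl

lemma hw1 : ∀ i, del (w1 i) = ((i:ℚ)+1) • w1 (i+1) - (if i = 0 then vb 1 else 0) := by
  intro i
  by_cases h0 : i = 0
  · subst h0
    simp [w1, del_zero]
  · simp only [w1, if_neg h0, if_neg (Nat.succ_ne_zero i)]
    rw [del_smul, del_vb, sub_zero, smul_smul]
    congr 1
    rw [Nat.factorial_succ]
    push_cast
    have f2 := fact_ne i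
    have f4 : ((i:ℚ)+1) ≠ 0 := by positivity
    field_simp

-- rBell machinery
lemma coeff_polyLift (p : Polynomial RR) (k : ℕ) :
    (polyLift del p).coeff k = del (p.coeff k) := by
  unfold polyLift
  rw [Polynomial.sum_def, Polynomial.finset_sum_coeff]
  simp only [Polynomial.coeff_C_mul, Polynomial.coeff_X_pow]
  rw [Finset.sum_eq_single k]
  · rw [if_pos rfl, mul_one]
  · intro b hb hbk
    rw [if_neg (Ne.symm hbk), mul_zero]
  · intro hk
    rw [Polynomial.notMem_support_iff.mp hk, del_zero, if_pos rfl, mul_one]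

lemma rBell_zero (k : ℕ) : rBell 0 k 0 = if k = 0 then 1 else 0 := by
  rw [rBell, Function.iterate_zero_apply, pow_zero, map_one, Polynomial.coeff_one]

lemma rBell_succ (n k : ℕ) :
    rBell (n+1) k 0
      = vb 1 * (if k = 0 then 0 else rBell n (k-1) 0) + del (rBell n k 0) := by
  rw [rBell, Function.iterate_succ_apply', EOp, Polynomial.coeff_add, coeff_polyLift]
  congr 1
  rw [mul_assoc, Polynomial.coeff_C_mul]
  congr 1
  cases k with
  | zero =>
    rw [if_pos rfl, Polynomial.mul_coeff_zero, Polynomial.coeff_X_zero, zero_mul]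
  | succ m =>
    rw [if_neg (Nat.succ_ne_zero m), Polynomial.coeff_X_mul, Nat.succ_sub_one]
    rfl

-- main Bell identity
lemma bell_eq : ∀ α γ : ℕ, ((γ.factorial : ℚ)) • rBell α γ 0 = ((α.factorial : ℚ)) • Pfun w1 γ α := by
  intro α
  induction α with
  | zero =>
    intro γ
    rw [rBell_zero, Nat.factorial_zero, Nat.cast_one, one_smul]
    cases γ with
    | zero => rw [Pfun_zero]; simp
    | succ k =>
      rw [Pfun_xorder w1 w1_zero (k+1) 0 (Nat.succ_pos k)]
      simp
  | succ α ih =>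
    intro γ
    rw [rBell_succ]
    cases γ with
    | zero =>
      rw [if_pos rfl, mul_zero, zero_add, Nat.factorial_zero, Nat.cast_one, one_smul]
      have hIH := ih 0
      rw [Nat.factorial_zero, Nat.cast_one, one_smul] at hIH
      rw [hIH, del_smul, Pfun_del w1 hw1 0 α]
      simp only [Nat.cast_zero, zero_smul, sub_zero, CharP.cast_eq_zero]
      rw [smul_smul, Nat.factorial_succ]
      push_cast
      congr 1
      ring
    | succ k =>
      rw [if_neg (Nat.succ_ne_zero k), Nat.succ_sub_one]
      have h1 := ih k
      have h2 := ih (k+1)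
      have h3 : ((k+1).factorial : ℚ) • del (rBell α (k+1) 0)
          = (α.factorial : ℚ) • (((α:ℚ)+1) • Pfun w1 (k+1) (α+1)
              - (((k+1):ℕ):ℚ) • (vb 1 * Pfun w1 k α)) := by
        rw [← del_smul, h2, del_smul, Pfun_del w1 hw1 (k+1) α, Nat.add_sub_cancel]
      have h4 : ((k+1).factorial : ℚ) • (vb 1 * rBell α k 0)
          = (((k:ℚ)+1)) • ((α.factorial : ℚ) • (vb 1 * Pfun w1 k α)) := by
        rw [Nat.factorial_succ]
        push_cast
        rw [mul_smul]
        congr 1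
        rw [← mul_smul_comm, h1, mul_smul_comm]
      rw [smul_add, h4, h3, Nat.factorial_succ (α)]
      push_cast
      module

-- main star identity
lemma star_eq : ∀ γ α : ℕ, Pfun w2 γ α
    = if γ ≤ α then (((α-γ).factorial : ℚ))⁻¹ • del^[α-γ] (vb 1 ^ γ) else 0 := by
  intro γ
  induction γ with
  | zero =>
    intro α
    rw [Pfun_zero, if_pos (Nat.zero_le α), pow_zero, Nat.sub_zero]
    rcases Nat.eq_zero_or_pos α with h0 | h0
    · subst h0; simp
    · rw [if_neg (by omega), del_iter_one α h0, smul_zero]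
  | succ k ihγ =>
    intro α
    rw [Pfun_succ]
    by_cases hle : k+1 ≤ α
    · set n := α - (k+1) with hn
      have hterm : ∀ i ∈ Finset.range (α+1),
          w2 i * Pfun w2 k (α - i)
            = if 1 ≤ i ∧ i ≤ n+1 then
                (((i-1).factorial : ℚ))⁻¹ • ((((α-i-k).factorial : ℚ))⁻¹ •
                  (vb i * del^[α-i-k] (vb 1 ^ k)))
              else 0 := by
        intro i hi
        simp only [Finset.mem_range] at hi
        by_cases h1 : 1 ≤ i ∧ i ≤ n+1
        · rw [if_pos h1]
          have hki : k ≤ α - i := by omega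
          rw [ihγ (α-i), if_pos hki]
          show (if i = 0 then 0 else (((i-1).factorial : ℚ))⁻¹ • vb i) * _ = _
          rw [if_neg (by omega : ¬ i = 0), smul_mul_assoc, mul_smul_comm]
        · rw [if_neg h1]
          by_cases h0 : i = 0
          · rw [h0, w2_zero, zero_mul]
          · rw [ihγ (α-i), if_neg (by omega), mul_zero]
      rw [Finset.sum_congr rfl hterm]
      have hsub : Finset.range (n+2) ⊆ Finset.range (α+1) := by
        intro x hx
        simp only [Finset.mem_range] at *
        omega
      rw [← Finset.sum_subset hsub (by
        intro x hx hx2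
        simp only [Finset.mem_range] at hx hx2
        rw [if_neg (by omega)])]
      rw [Finset.sum_range_succ' (fun i => if 1 ≤ i ∧ i ≤ n+1 then
          (((i-1).factorial : ℚ))⁻¹ • ((((α-i-k).factorial : ℚ))⁻¹ •
            (vb i * del^[α-i-k] (vb 1 ^ k))) else 0)]
      rw [if_neg (by omega), add_zero]
      rw [if_pos hle, pow_succ', del_iter_mul n (vb 1) (vb 1 ^ k), Finset.smul_sum]
      apply Finset.sum_congr rfl
      intro m hm
      simp only [Finset.mem_range] at hm
      rw [if_pos (by omega : 1 ≤ m+1 ∧ m+1 ≤ n+1)]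
      rw [Nat.add_sub_cancel, del_iter_vb, smul_smul, smul_smul, fact_inv_choose n m (by omega)]
      have he : α - (m+1) - k = n - m := by omega
      rw [he]
    · rw [if_neg hle]
      apply Finset.sum_eq_zero
      intro i hi
      simp only [Finset.mem_range] at hi
      by_cases h0 : i = 0
      · rw [h0, w2_zero, zero_mul]
      · rw [ihγ (α-i), if_neg (by omega), mul_zero]


lemma Scirc_eq : Scirc = sexp (tLin w1) := by
  apply MvPowerSeries.ext
  intro d
  rw [sexp_tLin]
  rw [MvPowerSeries.coeff_apply]
  show (if d 1 ≤ d 0 then ((d 0).factorial : ℚ)⁻¹ • rBell (d 0) (d 1) 0 else 0) = _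
  by_cases h : d 1 ≤ d 0
  · rw [if_pos h]
    have hb := bell_eq (d 0) (d 1)
    have f1 := fact_ne (d 0)
    have f2 := fact_ne (d 1)
    have : rBell (d 0) (d 1) 0
        = (((d 1).factorial : ℚ))⁻¹ • (((d 0).factorial : ℚ)) • Pfun w1 (d 1) (d 0) := by
      rw [← hb, smul_smul, inv_mul_cancel₀ f2, one_smul]
    rw [this, smul_smul, smul_smul]
    congr 1
    field_simp
  · rw [if_neg h, Pfun_xorder w1 w1_zero (d 1) (d 0) (by omega), smul_zero]

lemma Sstar_eq : Sstar = sexp (tLin w2) := by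
  apply MvPowerSeries.ext
  intro d
  rw [sexp_tLin, star_eq (d 1) (d 0)]
  rw [MvPowerSeries.coeff_apply]
  show (if d 1 ≤ d 0 then
      (((d 0 - d 1).factorial * (d 1).factorial : ℚ))⁻¹ • del^[d 0 - d 1] (vb 1 ^ d 1)
    else 0) = _
  by_cases h : d 1 ≤ d 0
  · rw [if_pos h, if_pos h, smul_smul]
    congr 1
    push_cast
    rw [mul_inv]
    ring
  · rw [if_neg h, if_neg h, smul_zero]

lemma warg (i : ℕ) : w1 i = w2 i
    + (if 2 ≤ i then (-(((i : ℚ) - 1) / ((i.factorial : ℚ)))) • vb i else 0) := by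
  match i with
  | 0 => simp [w1, w2]
  | 1 => norm_num [w1, w2]
  | (m+2) =>
    rw [if_pos (by omega)]
    show (((m+2).factorial : ℚ))⁻¹ • vb (m+2)
        = ((((m+2)-1).factorial : ℚ))⁻¹ • vb (m+2)
          + (-((((m+2:ℕ) : ℚ) - 1) / (((m+2).factorial : ℚ)))) • vb (m+2)
    rw [← add_smul]
    congr 1
    have h1 : (m+2) - 1 = m+1 := by omega
    rw [h1, Nat.factorial_succ (m+1)]
    have f2 := fact_ne (m+1)
    have f3 : ((m:ℚ)+2) ≠ 0 := by positivity
    push_cast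
    field_simp
    ring

lemma arg_eq : tLin w1 = tLin w2 + Zarg2 := by
  apply MvPowerSeries.ext
  intro d
  rw [map_add]
  rw [MvPowerSeries.coeff_apply, MvPowerSeries.coeff_apply, MvPowerSeries.coeff_apply]
  show (if d 1 = 1 then w1 (d 0) else 0)
      = (if d 1 = 1 then w2 (d 0) else 0)
        + (if d 1 = 1 ∧ 2 ≤ d 0 then
            (-(((d 0 : ℚ) - 1) / ((d 0).factorial : ℚ))) • vb (d 0) else 0)
  by_cases h : d 1 = 1
  · rw [if_pos h, if_pos h, warg (d 0)]
    congr 1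
    by_cases h2 : 2 ≤ d 0
    · rw [if_pos h2, if_pos (⟨h, h2⟩ : d 1 = 1 ∧ 2 ≤ d 0)]
    · rw [if_neg h2, if_neg (by tauto)]
  · rw [if_neg h, if_neg h, if_neg (by tauto), add_zero]

lemma tLin_zero_coeff (w : ℕ → RR) : (tLin w) 0 = 0 := by
  show (if (0 : Fin 2 →₀ ℕ) 1 = 1 then w ((0 : Fin 2 →₀ ℕ) 0) else 0) = 0
  rw [if_neg]
  simp

lemma Zarg2_zero_coeff : Zarg2 0 = 0 := by
  show (if (0 : Fin 2 →₀ ℕ) 1 = 1 ∧ 2 ≤ (0 : Fin 2 →₀ ℕ) 0 then _ else 0) = 0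
  rw [if_neg]
  simp


/-- In `R⟦x,t⟧`,
`∑_{n≥k≥0} B^0_{n,k} x^n t^k/n! =
  (∑_{n,r≥0} ∂^n(b_1^r)·x^{n+r} t^r/(n!·r!)) · exp(−t·∑_{i≥2} ((i−1)/i!)·b_i x^i)`. -/
theorem stmt6 : Scirc = Sstar * sexp Zarg2 := by
  rw [Scirc_eq, Sstar_eq, arg_eq, sexp_mul (tLin_zero_coeff w2) Zarg2_zero_coeff]
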